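/- arXiv:2110.12515 — 3 statements merged into one kernel-verified Lean document; each statement's English description precedes it below -/
import Mathlib

section
/- For the recursively defined operator family Q_{k+1}(lτ), the operator norm estimate ‖Q_{k+1}(lτ)‖ ≤ C(k,l) ‖A₀‖^{k−l} ‖A₁‖^{l} holds for all k, l ≥ 0 with l ≤ k, where C(k,l) is the binomial coefficient. -/
lemma aux_pow_norm {X : Type*} [NormedAddCommGroup X] [NormedSpace ℝ X]
    (A : X →L[ℝ] X) (n : ℕ) : ‖A ^ n‖ ≤ ‖A‖ ^ n := by
  cases n with
  | zero => simpa [ContinuousLinearMap.one_def] using ContinuousLinearMap.norm_id_le (𝕜 := ℝ) (E := X)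
  | succ n => exact norm_pow_le' A n.succ_pos

lemma aux_choose_sum (l k : ℕ) (h : l + 1 ≤ k) :
    ∑ m ∈ Finset.Icc (l + 1) k, (m - 1).choose l = k.choose (l + 1) := by
  have hk : k - 1 + 1 = k := by omega
  rw [← hk, ← Nat.sum_Icc_choose (k - 1) l, ← Finset.map_add_right_Icc l (k - 1) 1,
    Finset.sum_map]
  simp

theorem stmt_4 {X : Type*} [NormedAddCommGroup X] [NormedSpace ℝ X]
    (A₀ A₁ : X →L[ℝ] X) (τ : ℝ) (hτ : 0 < τ)
    (Q : ℕ → ℤ → (X →L[ℝ] X))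
    (h0 : ∀ l : ℤ, Q 0 l = 0)
    (hneg : ∀ k : ℕ, Q k (-1) = 0)
    (hbase : ∀ k : ℕ, Q (k + 1) 0 = A₀ ^ k)
    (hrec : ∀ k l : ℕ, 1 ≤ l →
      Q (k + 1) l = ∑ m ∈ Finset.Icc l k, A₀ ^ (k - m) * A₁ * Q m ((l : ℤ) - 1)) :
    ∀ k l : ℕ, l ≤ k →
      ‖Q (k + 1) l‖ ≤ (k.choose l : ℝ) * ‖A₀‖ ^ (k - l) * ‖A₁‖ ^ l := by
  intro k l
  induction l generalizing k with
  | zero =>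
    intro _
    rw [Nat.cast_zero, hbase]
    simpa using aux_pow_norm A₀ k
  | succ l ih =>
    intro hlk
    have hcast : ((l + 1 : ℕ) : ℤ) - 1 = (l : ℤ) := by push_cast; ring
    rw [hrec k (l + 1) (Nat.succ_le_succ (Nat.zero_le l)), hcast]
    calc ‖∑ m ∈ Finset.Icc (l + 1) k, A₀ ^ (k - m) * A₁ * Q m (l : ℤ)‖
        ≤ ∑ m ∈ Finset.Icc (l + 1) k, ‖A₀ ^ (k - m) * A₁ * Q m (l : ℤ)‖ := norm_sum_le _ _
      _ ≤ ∑ m ∈ Finset.Icc (l + 1) k,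
            ((m - 1).choose l : ℝ) * (‖A₀‖ ^ (k - (l + 1)) * ‖A₁‖ ^ (l + 1)) := by
          apply Finset.sum_le_sum
          intro m hm
          simp only [Finset.mem_Icc] at hm
          obtain ⟨n, rfl⟩ : ∃ n, m = n + 1 := ⟨m - 1, by omega⟩
          have h1 : ‖A₀ ^ (k - (n + 1)) * A₁ * Q (n + 1) (l : ℤ)‖ ≤
              ‖A₀ ^ (k - (n + 1))‖ * ‖A₁‖ * ‖Q (n + 1) (l : ℤ)‖ :=
            le_trans (norm_mul_le _ _) (by gcongr; exact norm_mul_le _ _)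
          have h2 := ih n (by omega)
          have h3 : ‖A₀ ^ (k - (n + 1))‖ * ‖A₁‖ * ‖Q (n + 1) (l : ℤ)‖ ≤
              ‖A₀‖ ^ (k - (n + 1)) * ‖A₁‖ *
                ((n.choose l : ℝ) * ‖A₀‖ ^ (n - l) * ‖A₁‖ ^ l) := by
            gcongr
            · exact aux_pow_norm A₀ _
          have hexp : (k - (n + 1)) + (n - l) = k - (l + 1) := by omega
          calc ‖A₀ ^ (k - (n + 1)) * A₁ * Q (n + 1) (l : ℤ)‖
              ≤ ‖A₀‖ ^ (k - (n + 1)) * ‖A₁‖ *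
                  ((n.choose l : ℝ) * ‖A₀‖ ^ (n - l) * ‖A₁‖ ^ l) := le_trans h1 h3
            _ = ((n + 1 - 1).choose l : ℝ) * (‖A₀‖ ^ (k - (l + 1)) * ‖A₁‖ ^ (l + 1)) := by
                simp only [Nat.add_sub_cancel]
                rw [← hexp, pow_add]
                ring
      _ = (∑ m ∈ Finset.Icc (l + 1) k, ((m - 1).choose l : ℝ)) *
            (‖A₀‖ ^ (k - (l + 1)) * ‖A₁‖ ^ (l + 1)) := (Finset.sum_mul _ _ _).symm
      _ = (k.choose (l + 1) : ℝ) * ‖A₀‖ ^ (k - (l + 1)) * ‖A₁‖ ^ (l + 1) := by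
          rw [← Nat.cast_sum, aux_choose_sum l k hlk]
          ring
end

section
/- Let A₀, A₁ be commuting bounded linear operators on a Banach space X (A₀A₁ = A₁A₀), τ > 0, and set A₂ = A₁ exp(−A₀τ). Then the delayed Dyson–Phillips series S(t;τ) = ∑_{n=0}^∞ A₁ⁿ exp(A₀(t − nτ)) (t−nτ)ⁿ/n! · 𝟙_{t ≥ nτ} equals exp(A₀ t) · exp_τ(A₂ t), where exp_τ(A₂ t) = ∑_{n=0}^∞ A₂ⁿ (t−nτ)ⁿ/n! · 𝟙_{t ≥ nτ} is the pure delayed operator exponential; moreover exp(A₀t) and exp_τ(A₂t) commute. -/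
set_option maxHeartbeats 1000000
set_option synthInstance.maxHeartbeats 400000

open NormedSpace

theorem stmt_11 {X : Type*} [NormedAddCommGroup X] [NormedSpace ℝ X] [CompleteSpace X]
    (A₀ A₁ : X →L[ℝ] X) (hcomm : A₀ * A₁ = A₁ * A₀) (τ : ℝ) (hτ : 0 < τ)
    (t : ℝ) (ht : 0 ≤ t) :
    (∑' n : ℕ, if (n : ℝ) * τ ≤ t then
        ((t - n * τ) ^ n / n.factorial : ℝ) • (A₁ ^ n * NormedSpace.exp ((t - n * τ) • A₀))
      else 0)
      = NormedSpace.exp (t • A₀) *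
        (∑' n : ℕ, if (n : ℝ) * τ ≤ t then
            ((t - n * τ) ^ n / n.factorial : ℝ) • (A₁ * NormedSpace.exp ((-τ) • A₀)) ^ n
          else 0) ∧
    Commute (NormedSpace.exp (t • A₀))
      (∑' n : ℕ, if (n : ℝ) * τ ≤ t then
          ((t - n * τ) ^ n / n.factorial : ℝ) • (A₁ * NormedSpace.exp ((-τ) • A₀)) ^ n
        else 0) := by
  set B : X →L[ℝ] X := A₁ * NormedSpace.exp ((-τ) • A₀) with hB
  set E : X →L[ℝ] X := NormedSpace.exp (t • A₀) with hE
  have hA : Commute A₀ A₁ := hcomm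
  set g : ℕ → X →L[ℝ] X := fun n =>
    if (n : ℝ) * τ ≤ t then ((t - n * τ) ^ n / n.factorial : ℝ) • B ^ n else 0 with hg
  -- summability of g
  have hsum : Summable g := by
    apply Summable.of_norm_bounded
      (Real.summable_pow_div_factorial (t * ‖B‖))
    intro n
    simp only [hg]
    split_ifs with h
    · have h0 : (0 : ℝ) ≤ t - n * τ := sub_nonneg.2 h
      have h1 : t - n * τ ≤ t := by
        nlinarith [mul_nonneg (Nat.cast_nonneg (α := ℝ) n) hτ.le]
      have hb : ‖B ^ n‖ ≤ ‖B‖ ^ n := by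
        cases n with
        | zero => rw [pow_zero, pow_zero]; exact ContinuousLinearMap.norm_id_le
        | succ m => exact norm_pow_le' _ m.succ_pos
      calc ‖((t - n * τ) ^ n / n.factorial : ℝ) • B ^ n‖
          ≤ ‖((t - n * τ) ^ n / n.factorial : ℝ)‖ * ‖B ^ n‖ := (B ^ n).opNorm_smul_le _
        _ ≤ ((t - n * τ) ^ n / n.factorial) * ‖B‖ ^ n := by
            rw [Real.norm_of_nonneg (by positivity)]
            gcongr
        _ ≤ (t ^ n / n.factorial) * ‖B‖ ^ n := by gcongr
        _ = (t * ‖B‖) ^ n / n.factorial := by ring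
    · simp only [norm_zero]
      positivity
  -- commutation facts
  have hAB : Commute A₀ B := by
    exact (hA.mul_right (((Commute.refl A₀).smul_right (-τ)).exp_right))
  have hEBn : ∀ n : ℕ, Commute E (B ^ n) := fun n =>
    ((hAB.smul_left t).exp_left).pow_right n
  have hEg : ∀ n : ℕ, Commute E (g n) := by
    intro n
    simp only [hg]
    split_ifs with h
    · exact (hEBn n).smul_right _
    · exact Commute.zero_right E
  -- termwise identity
  have hterm : ∀ n : ℕ,
      (if (n : ℝ) * τ ≤ t then
        ((t - n * τ) ^ n / n.factorial : ℝ) • (A₁ ^ n * NormedSpace.exp ((t - n * τ) • A₀))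
      else 0) = E * g n := by
    intro n
    simp only [hg]
    split_ifs with h
    · rw [mul_smul_comm]
      congr 1
      letI : NormedAlgebra ℚ (X →L[ℝ] X) := .restrictScalars ℚ ℝ _
      have h1 : Commute A₁ (NormedSpace.exp ((-τ) • A₀)) :=
        (hA.symm.smul_right (-τ)).exp_right
      have hBn : B ^ n = A₁ ^ n * NormedSpace.exp (((-(n * τ)) : ℝ) • A₀) := by
        rw [hB, h1.mul_pow, ← NormedSpace.exp_nsmul]
        congr 2
        rw [← Nat.cast_smul_eq_nsmul ℝ, smul_smul]
        congr 1
        ring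
      rw [hBn, ← mul_assoc, hE, ((hA.smul_left t).exp_left).pow_right n |>.eq,
        mul_assoc, ← NormedSpace.exp_add_of_commute
          (((Commute.refl A₀).smul_left t).smul_right (-(n*τ)))]
      congr 1
      rw [← add_smul]
      ring_nf
    · simp
  constructor
  · rw [tsum_congr hterm, hsum.tsum_mul_left E]
  · show E * _ = _ * E
    rw [← hsum.tsum_mul_left E, ← hsum.tsum_mul_right E]
    exact tsum_congr fun n => (hEg n).eq
end

section
/- Let τ > 0 and A₁ be a bounded operator on a Banach space X. The pure delayed operator exponential exp_τ(A₁ t), defined piecewise as Θ for −τ ≤ t < 0, I at t = 0, and ∑_{l=0}^{n} A₁^{l} (t − lτ)^{l}/l! for nτ < t ≤ (n+1)τ (n ≥ 0), satisfies the delay differential equation d/dt exp_τ(A₁ t) = A₁ exp_τ(A₁ (t − τ)) for all t > 0 with t ∉ τℕ (and one-sidedly at the junction points). -/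
theorem stmt_15 {X : Type*} [NormedAddCommGroup X] [NormedSpace ℝ X] [CompleteSpace X]
    (A₁ : X →L[ℝ] X) (τ : ℝ) (hτ : 0 < τ)
    (E : ℝ → (X →L[ℝ] X))
    (hE : ∀ t : ℝ, E t = ∑' l : ℕ, if (l : ℝ) * τ ≤ t then
      ((t - l * τ) ^ l / l.factorial : ℝ) • A₁ ^ l else 0) :
    ∀ t : ℝ, 0 < t → (∀ n : ℕ, t ≠ n * τ) →
      HasDerivAt E (A₁ * E (t - τ)) t := by
  intro t ht htn
  set N : ℕ := ⌊t / τ⌋.toNat with hNdef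
  have hfloor : (0 : ℤ) ≤ ⌊t / τ⌋ := Int.floor_nonneg.mpr (le_of_lt (div_pos ht hτ))
  have hNcast : (N : ℝ) = ((⌊t / τ⌋ : ℤ) : ℝ) := by
    rw [hNdef]; exact_mod_cast congrArg (fun z : ℤ => (z : ℝ)) (Int.toNat_of_nonneg hfloor)
  have h1 : (N : ℝ) * τ ≤ t := by
    have := Int.floor_le (t / τ)
    rw [hNcast]
    calc ((⌊t / τ⌋ : ℤ) : ℝ) * τ ≤ (t / τ) * τ := by nlinarith
      _ = t := div_mul_cancel₀ t (ne_of_gt hτ)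
  have hNt : (N : ℝ) * τ < t := lt_of_le_of_ne h1 (fun h => htn N h.symm)
  have htN : t < ((N : ℝ) + 1) * τ := by
    have := Int.lt_floor_add_one (t / τ)
    have h2 : t / τ < (N : ℝ) + 1 := by rw [hNcast]; exact_mod_cast this
    calc t = (t / τ) * τ := (div_mul_cancel₀ t (ne_of_gt hτ)).symm
      _ < ((N : ℝ) + 1) * τ := by nlinarith
  -- local polynomial form
  have hEloc : ∀ s ∈ Set.Ioo ((N : ℝ) * τ) (((N : ℝ) + 1) * τ),
      E s = ∑ l ∈ Finset.range (N + 1),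
        ((s - l * τ) ^ l / l.factorial : ℝ) • A₁ ^ l := by
    intro s hs
    rw [hE s, tsum_eq_sum (s := Finset.range (N + 1))]
    · refine Finset.sum_congr rfl (fun l hl => ?_)
      rw [if_pos]
      have hlN : l ≤ N := Nat.lt_succ_iff.mp (Finset.mem_range.mp hl)
      have : (l : ℝ) ≤ (N : ℝ) := by exact_mod_cast hlN
      nlinarith [hs.1]
    · intro l hl
      rw [if_neg]
      have hlN : N + 1 ≤ l := Nat.not_lt.mp (fun h => hl (Finset.mem_range.mpr h))
      have : (N : ℝ) + 1 ≤ (l : ℝ) := by exact_mod_cast hlN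
      nlinarith [hs.2]
  have hmem : t ∈ Set.Ioo ((N : ℝ) * τ) (((N : ℝ) + 1) * τ) := ⟨hNt, htN⟩
  have hnhds : Set.Ioo ((N : ℝ) * τ) (((N : ℝ) + 1) * τ) ∈ nhds t := Ioo_mem_nhds hNt htN
  have hEv : E =ᶠ[nhds t] fun s => ∑ l ∈ Finset.range (N + 1),
      ((s - l * τ) ^ l / l.factorial : ℝ) • A₁ ^ l :=
    Filter.eventuallyEq_of_mem hnhds hEloc
  -- derivative of the polynomial
  have hP : HasDerivAt (fun s => ∑ l ∈ Finset.range (N + 1),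
      ((s - l * τ) ^ l / l.factorial : ℝ) • A₁ ^ l)
      (∑ l ∈ Finset.range (N + 1),
        ((l : ℝ) * (t - l * τ) ^ (l - 1) / l.factorial) • A₁ ^ l) t := by
    apply HasDerivAt.fun_sum
    intro l _
    have h := ((((hasDerivAt_id t).sub_const ((l : ℝ) * τ)).pow l).div_const
      (l.factorial : ℝ)).smul_const (A₁ ^ l)
    simpa using h
  -- identify the derivative
  have key : A₁ * E (t - τ) = ∑ l ∈ Finset.range (N + 1),
      ((l : ℝ) * (t - l * τ) ^ (l - 1) / l.factorial) • A₁ ^ l := by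
    have hEtτ : E (t - τ) = ∑ l ∈ Finset.range N,
        ((t - τ - l * τ) ^ l / l.factorial : ℝ) • A₁ ^ l := by
      rw [hE (t - τ), tsum_eq_sum (s := Finset.range N)]
      · refine Finset.sum_congr rfl (fun l hl => ?_)
        rw [if_pos]
        have hlN : l + 1 ≤ N := Finset.mem_range.mp hl
        have : (l : ℝ) + 1 ≤ (N : ℝ) := by exact_mod_cast hlN
        nlinarith
      · intro l hl
        rw [if_neg]
        have hlN : N ≤ l := Nat.not_lt.mp (fun h => hl (Finset.mem_range.mpr h))
        have : (N : ℝ) ≤ (l : ℝ) := by exact_mod_cast hlN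
        nlinarith
    rw [hEtτ, Finset.mul_sum, Finset.sum_range_succ']
    simp only [Nat.cast_zero, zero_mul, zero_div, zero_smul, add_zero]
    refine Finset.sum_congr rfl (fun l _ => ?_)
    rw [mul_smul_comm, ← pow_succ']
    congr 1
    · push_cast [Nat.factorial_succ]
      have hfac : (0 : ℝ) < (l.factorial : ℝ) := by exact_mod_cast l.factorial_pos
      field_simp
      ring
  exact key ▸ hP.congr_of_eventuallyEq hEv
end
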